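/- Suppose f : X∖C → X (as in the context) is strongly transitive and has a fixed point (Fix(f) ≠ ∅, where Fix(f) = {x ∈ X∖C : f(x) = x}). Then the iterate f^ℓ is strongly transitive for every integer ℓ ≥ 1. -/

import Mathlib

open Set Function

variable {X : Type*} [MetricSpace X]

/-- `n`-step preimage of `A` under the partial map `g` (defined on `good`),
relative to the ambient set `W`: the first `n` iterates must avoid the
complement of `good` and stay in `W`. -/
def preImg (g : X → X) (good W : Set X) (n : ℕ) (A : Set X) : Set X :=
  {x | x ∈ W ∧ (∀ j < n, g^[j] x ∈ good ∩ W) ∧ g^[n] x ∈ A}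

/-- The α-limit set `α_g(x) = ⋂_{n≥0} closure (⋃_{k≥0} g^{-k}(g^{-n}(x)))`. -/
def alphaLim (g : X → X) (good W : Set X) (x : X) : Set X :=
  ⋂ n : ℕ, closure (⋃ k : ℕ, preImg g good W k (preImg g good W n {x}))

/-- `f*(U) = f(U ∖ C)`. -/
def fstar (f : X → X) (C : Set X) (U : Set X) : Set X := f '' (U \ C)

/-- The set of points whose orbit hits `C` within the first `ℓ` iterates,
i.e. the critical set of the partial map `f^ℓ`. -/
def critSet (f : X → X) (C : Set X) (ℓ : ℕ) : Set X := {x | ∃ j < ℓ, f^[j] x ∈ C}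

/-- `g` (defined off the complement of `good`) is strongly transitive:
`α_g(x) = X` for every `x` in the domain. -/
def StronglyTransitiveMap (g : X → X) (good : Set X) : Prop :=
  ∀ x ∈ good, alphaLim g good Set.univ x = Set.univ

/-- `g` is transitive: `α_g(x) = X` for a dense set of points of the domain. -/
def TransitiveMap (g : X → X) (good : Set X) : Prop :=
  Dense {x | x ∈ good ∧ alphaLim g good Set.univ x = Set.univ}

/-- `g` is transitive on the open set `W`: the α-limit set (in the whole space)
of each point of a dense subset of `W` contains the closure of `W`. -/
def TransitiveOnOpen (g : X → X) (good W : Set X) : Prop :=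
  ∃ D : Set X, D ⊆ W ∧ W ⊆ closure D ∧ ∀ x ∈ D, closure W ⊆ alphaLim g good Set.univ x

/-- The restriction `g|_W` is strongly transitive: the α-limit set under the
restriction of every point of `W` is dense in `W`. -/
def StronglyTransitiveOnSet (g : X → X) (good W : Set X) : Prop :=
  ∀ x ∈ W, W ⊆ closure (alphaLim g good W x)

section Aux
open Topology Filter
variable {C : Set X} {f : X → X}

lemma iterMapNhds (hf : IsLocalHomeomorphOn f Cᶜ) :
    ∀ (u : ℕ) (z : X), (∀ j < u, f^[j] z ∉ C) →
      Filter.map (f^[u]) (𝓝 z) = 𝓝 (f^[u] z) := by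
  intro u
  induction u with
  | zero => intro z _; simp
  | succ u ih =>
    intro z hz
    have h0 : z ∈ Cᶜ := hz 0 (Nat.succ_pos u)
    have h1 : Filter.map f (𝓝 z) = 𝓝 (f z) := hf.map_nhds_eq h0
    have h2 := ih (f z) (fun j hj => by
      have := hz (j + 1) (by omega)
      rwa [Function.iterate_succ_apply] at this)
    calc Filter.map (f^[u + 1]) (𝓝 z)
        = Filter.map (f^[u]) (Filter.map f (𝓝 z)) := by
          rw [Filter.map_map, ← Function.iterate_succ]
      _ = 𝓝 (f^[u + 1] z) := by rw [h1, h2, ← Function.iterate_succ_apply]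

lemma iterContAt (hf : IsLocalHomeomorphOn f Cᶜ) (u : ℕ) (z : X)
    (hz : ∀ j < u, f^[j] z ∉ C) : ContinuousAt (f^[u]) z :=
  (iterMapNhds hf u z hz).le

lemma chainNhd (hf : IsLocalHomeomorphOn f Cᶜ) (hC : IsClosed C) (u : ℕ) (z : X)
    (hz : ∀ j < u, f^[j] z ∉ C) : {y | ∀ j < u, f^[j] y ∉ C} ∈ 𝓝 z := by
  have he : {y | ∀ j < u, f^[j] y ∉ C} = ⋂ j ∈ Finset.range u, f^[j] ⁻¹' Cᶜ := by
    ext y; simp [Finset.mem_range]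
  rw [he, Filter.biInter_finset_mem]
  intro j hj
  have hj' : j < u := Finset.mem_range.mp hj
  exact (iterContAt hf j z fun i hi => hz i (hi.trans hj')).preimage_mem_nhds
    (hC.isOpen_compl.mem_nhds (hz j hj'))

lemma densePre (hst : StronglyTransitiveMap f Cᶜ) {x : X} (hx : x ∉ C)
    (N : ℕ) (b : X) {ε : ℝ} (hε : 0 < ε) :
    ∃ w, dist b w < ε ∧ ∃ t, N ≤ t ∧ (∀ j < t, f^[j] w ∉ C) ∧ f^[t] w = x := by
  have h := hst x hx
  have hb : b ∈ alphaLim f Cᶜ Set.univ x := by rw [h]; exact Set.mem_univ b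
  rw [alphaLim, Set.mem_iInter] at hb
  have hb' := hb N
  rw [Metric.mem_closure_iff] at hb'
  obtain ⟨w, hw, hd⟩ := hb' ε hε
  rw [Set.mem_iUnion] at hw
  obtain ⟨k, _, h1, h2⟩ := hw
  obtain ⟨_, h3, h4⟩ := h2
  refine ⟨w, hd, k + N, le_add_self, ?_, ?_⟩
  · intro j hj
    rcases lt_or_ge j k with hjk | hjk
    · exact (h1 j hjk).1
    · have heq : f^[j] w = f^[j - k] (f^[k] w) := by
        rw [← Function.iterate_add_apply]; congr 1; omega
      rw [heq]
      exact (h3 (j - k) (by omega)).1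
  · rw [Nat.add_comm, Function.iterate_add_apply]; exact h4

lemma pullback (hf : IsLocalHomeomorphOn f Cᶜ) (hC : IsClosed C)
    {p : X} (hpC : p ∉ C) (hfp : f p = p)
    (e : OpenPartialHomeomorph X X) (hep : p ∈ e.source) (heq : Set.EqOn f e e.source) :
    ∀ (s : ℕ) (δ : ℝ), 0 < δ → ∃ η, 0 < η ∧ η ≤ δ ∧ ∀ w, dist p w < η →
      ∀ i ≤ s, dist p (e.symm^[i] w) < δ ∧ e.symm^[i] w ∉ C ∧ e.symm^[i] w ∈ e.target := by
  have hpe : e p = p := (heq hep).symm.trans hfp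
  have hpt : p ∈ e.target := hpe ▸ e.map_source hep
  have hsp : e.symm p = p := by conv_lhs => rw [← hpe, e.left_inv hep]
  -- base neighborhood avoiding C and inside target
  obtain ⟨ρ, hρ, hρs⟩ : ∃ ρ > 0, Metric.ball p ρ ⊆ Cᶜ ∩ e.target := by
    have : Cᶜ ∩ e.target ∈ 𝓝 p :=
      Filter.inter_mem (hC.isOpen_compl.mem_nhds hpC) (e.open_target.mem_nhds hpt)
    obtain ⟨ρ, hρ, hsub⟩ := Metric.mem_nhds_iff.mp this
    exact ⟨ρ, hρ, hsub⟩
  intro s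
  induction s with
  | zero =>
    intro δ hδ
    refine ⟨min δ ρ, lt_min hδ hρ, min_le_left _ _, fun w hw i hi => ?_⟩
    interval_cases i
    have hwρ : w ∈ Metric.ball p ρ := by
      rw [Metric.mem_ball, dist_comm]; exact hw.trans_le (min_le_right _ _)
    have := hρs hwρ
    exact ⟨by simpa using hw.trans_le (min_le_left _ _), this.1, this.2⟩
  | succ s ih =>
    intro δ hδ
    obtain ⟨η, hη, hηδ, hmain⟩ := ih δ hδ
    have hcont : ContinuousAt e.symm p := e.continuousAt_symm hpt
    rw [Metric.continuousAt_iff] at hcont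
    obtain ⟨η₂, hη₂, hcl⟩ := hcont η hη
    refine ⟨min η₂ (min η ρ), lt_min hη₂ (lt_min hη hρ),
      (min_le_right _ _).trans ((min_le_left _ _).trans hηδ), fun w hw i hi => ?_⟩
    have hwρ : w ∈ Metric.ball p ρ := by
      rw [Metric.mem_ball, dist_comm]
      exact hw.trans_le ((min_le_right _ _).trans (min_le_right _ _))
    rcases Nat.eq_zero_or_pos i with hi0 | hip
    · subst hi0
      have h1 := hρs hwρ
      refine ⟨hw.trans_le (((min_le_right _ _).trans (min_le_left _ _)).trans hηδ), h1.1, h1.2⟩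
    · obtain ⟨i', rfl⟩ : ∃ i', i = i' + 1 := ⟨i - 1, by omega⟩
      have hsw : dist p (e.symm w) < η := by
        have := hcl (x := w) (by rw [dist_comm]; exact hw.trans_le (min_le_left _ _))
        rwa [hsp, dist_comm] at this
      have := hmain (e.symm w) hsw i' (by omega)
      rwa [← Function.iterate_succ_apply] at this

lemma chainFormula (e : OpenPartialHomeomorph X X) (heq : Set.EqOn f e e.source)
    (s : ℕ) (w : X) (ht : ∀ i ≤ s, e.symm^[i] w ∈ e.target) :
    ∀ j ≤ s, f^[j] (e.symm^[s] w) = e.symm^[s - j] w := by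
  intro j
  induction j with
  | zero => simp
  | succ j ih =>
    intro hj
    have h1 := ih (by omega)
    rw [Function.iterate_succ_apply', h1]
    have hs : s - j = (s - (j + 1)) + 1 := by omega
    rw [hs, Function.iterate_succ_apply']
    have hv : e.symm^[s - (j + 1)] w ∈ e.target := ht _ (by omega)
    rw [heq (e.map_target hv), e.right_inv hv]

end Aux

theorem stmt10 [TopologicalSpace.SeparableSpace X] [BaireSpace X]
    (hballs : ∀ x : X, ∃ γ : ℝ, 0 < γ ∧ IsCompact (Metric.closedBall x γ) ∧
      ∀ ε : ℝ, 0 < ε → ε ≤ γ → IsConnected (Metric.ball x ε))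
    (C : Set X) (hCcl : IsClosed C) (hCint : interior C = ∅)
    (f : X → X) (hf : IsLocalHomeomorphOn f Cᶜ)
    (hfib : ∀ x : X, {y | y ∉ C ∧ f y = x}.Finite)
    (hst : StronglyTransitiveMap f Cᶜ)
    (hfix : ∃ p : X, p ∉ C ∧ f p = p) :
    ∀ ℓ : ℕ, 1 ≤ ℓ → StronglyTransitiveMap (f^[ℓ]) (critSet f C ℓ)ᶜ := by
  intro ℓ hℓ x hx
  obtain ⟨p, hpC, hfp⟩ := hfix
  have hℓ0 : 0 < ℓ := hℓ
  have hxC : x ∉ C := fun h => hx ⟨0, hℓ0, by simpa using h⟩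
  ext b
  simp only [alphaLim, Set.mem_iInter, Set.mem_univ, iff_true]
  intro n
  rw [Metric.mem_closure_iff]
  intro ε hε
  -- a point z near b with a chain to p
  obtain ⟨z, hzb, u, -, hzch, hzp⟩ := densePre hst hpC 0 b hε
  set S := Metric.ball b ε ∩ {y | ∀ j < u, f^[j] y ∉ C} with hS
  have hSz : S ∈ nhds z := Filter.inter_mem
    (Metric.isOpen_ball.mem_nhds (by rw [Metric.mem_ball, dist_comm]; exact hzb))
    (chainNhd hf hCcl u z hzch)
  have himg : f^[u] '' S ∈ nhds p := by
    rw [← hzp, ← iterMapNhds hf u z hzch]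
    exact Filter.image_mem_map hSz
  obtain ⟨δ, hδ, hδsub⟩ := Metric.mem_nhds_iff.mp himg
  obtain ⟨e, hep, heq0⟩ := hf p hpC
  have heq : Set.EqOn f e e.source := fun y _ => congrFun heq0 y
  obtain ⟨η, hη, hηδ, hpb⟩ := pullback hf hCcl hpC hfp e hep heq ℓ δ hδ
  -- a point w near p with a chain of length ≥ ℓ n to x
  obtain ⟨w, hwp, t, htn, hwch, hwx⟩ := densePre hst hxC (ℓ * n) p hη
  set r := (u + t) % ℓ with hr
  set s := (ℓ - r) % ℓ with hsdef
  have hsℓ : s < ℓ := Nat.mod_lt _ hℓ0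
  have hfacts := hpb w hwp
  have htarget : ∀ i ≤ s, e.symm^[i] w ∈ e.target := fun i hi => (hfacts i (by omega)).2.2
  have hform := chainFormula e heq s w htarget
  have hfs : f^[s] (e.symm^[s] w) = w := by simpa using hform s le_rfl
  have hdvd : ℓ ∣ (u + s + t) := by
    apply Nat.dvd_of_mod_eq_zero
    have h1 : u + s + t = (u + t) + s := by ring
    have h2 : s % ℓ = s := Nat.mod_eq_of_lt hsℓ
    rw [h1, Nat.add_mod, ← hr, h2]
    rcases Nat.eq_zero_or_pos r with h0 | h0
    · simp [hsdef, h0]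
    · have hrℓ : r < ℓ := Nat.mod_lt _ hℓ0
      have hse : s = ℓ - r := by rw [hsdef]; exact Nat.mod_eq_of_lt (by omega)
      have hsum : r + s = ℓ := by omega
      rw [hsum, Nat.mod_self]
  obtain ⟨q, hq⟩ := hdvd
  have hnq : n ≤ q := by
    have h1 : ℓ * n ≤ ℓ * q := by
      calc ℓ * n ≤ t := htn
        _ ≤ u + s + t := by omega
        _ = ℓ * q := hq
    exact Nat.le_of_mul_le_mul_left h1 hℓ0
  have hws : e.symm^[s] w ∈ f^[u] '' S :=
    hδsub (by rw [Metric.mem_ball, dist_comm]; exact (hfacts s hsℓ.le).1)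
  obtain ⟨z', hz'S, hz'e⟩ := hws
  obtain ⟨hz'b, hz'ch⟩ := hz'S
  -- the whole chain of z' avoids C
  have key : ∀ m < ℓ * q, f^[m] z' ∉ C := by
    intro m hm
    rw [← hq] at hm
    rcases lt_or_ge m u with h1 | h1
    · exact hz'ch m h1
    rcases lt_or_ge m (u + s) with h2 | h2
    · have hme : f^[m] z' = f^[m - u] (f^[u] z') := by
        rw [← Function.iterate_add_apply]; congr 1; omega
      rw [hme, hz'e, hform (m - u) (by omega)]
      exact (hfacts (s - (m - u)) (by omega)).2.1
    · have hme : f^[m] z' = f^[m - u - s] (f^[s] (f^[u] z')) := by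
        rw [← Function.iterate_add_apply, ← Function.iterate_add_apply]
        congr 1; omega
      rw [hme, hz'e, hfs]
      exact hwch (m - u - s) (by omega)
  have hend : f^[ℓ * q] z' = x := by
    have hme : f^[ℓ * q] z' = f^[t] (f^[s] (f^[u] z')) := by
      rw [← Function.iterate_add_apply, ← Function.iterate_add_apply]
      congr 1; omega
    rw [hme, hz'e, hfs, hwx]
  have hgood : ∀ j < q, (f^[ℓ])^[j] z' ∈ (critSet f C ℓ)ᶜ ∩ Set.univ := by
    intro j hj
    refine ⟨fun hcrit => ?_, Set.mem_univ _⟩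
    obtain ⟨i, hi, hiC⟩ := hcrit
    rw [← Function.iterate_mul, ← Function.iterate_add_apply] at hiC
    have hlt : i + ℓ * j < ℓ * q := by
      have hm1 : ℓ * (j + 1) = ℓ * j + ℓ := Nat.mul_succ ℓ j
      have hm2 : ℓ * (j + 1) ≤ ℓ * q := Nat.mul_le_mul_left ℓ (by omega)
      omega
    exact key _ hlt hiC
  refine ⟨z', ?_, by rw [dist_comm]; exact Metric.mem_ball.mp hz'b⟩
  rw [Set.mem_iUnion]
  refine ⟨q - n, Set.mem_univ _, fun j hj => hgood j (by omega),
    Set.mem_univ _, fun j hj => ?_, ?_⟩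
  · rw [← Function.iterate_add_apply]
    exact hgood (j + (q - n)) (by omega)
  · show (f^[ℓ])^[n] ((f^[ℓ])^[q - n] z') ∈ ({x} : Set X)
    rw [← Function.iterate_add_apply]
    have hqe : n + (q - n) = q := by omega
    rw [hqe, ← Function.iterate_mul]
    exact Set.mem_singleton_iff.mpr hend
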